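/- (Spectrum of the b-step RSB (Parisi) correlation matrix, Appendix D of the paper) Let b ≥ 1 and let ξ₁, …, ξ_b, m be positive integers with ξ₁ ∣ ξ₂ ∣ ⋯ ∣ ξ_b ∣ m, and let c, q and p₁, …, p_b be real numbers. The matrix Q = c·I_m + Σ_{κ=1}^b p_κ·(I_{m/ξ_κ} ⊗ J_{ξ_κ}) + q·J_m has characteristic polynomial det(X·I_m − Q) = (X − (c + Σ_{κ=1}^b ξ_κ·p_κ + m·q)) · (X − (c + Σ_{κ=1}^b ξ_κ·p_κ))^{m/ξ_b − 1} · Π_{κ=1}^{b−1} (X − (c + Σ_{ς=1}^{κ} ξ_ς·p_ς))^{m/ξ_κ − m/ξ_{κ+1}} · (X − c)^{m − m/ξ₁}. -/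

import Mathlib

open Polynomial

open Matrix

lemma fiber_card (n ξ : ℕ) (hξ : 0 < ξ) (a : Fin n) :
    (Finset.univ.filter (fun i : Fin (n * ξ) => (i : ℕ) / ξ = (a : ℕ))).card = ξ := by
  have : (Finset.univ.filter (fun i : Fin (n * ξ) => (i : ℕ) / ξ = (a : ℕ))).card
      = (Finset.univ : Finset (Fin ξ)).card := by
    refine Finset.card_nbij' (i := fun i => (⟨(i : ℕ) % ξ, Nat.mod_lt _ hξ⟩ : Fin ξ))
      (j := fun j => (⟨(a : ℕ) * ξ + (j : ℕ), by
        calc (a:ℕ) * ξ + (j:ℕ) < (a:ℕ) * ξ + ξ := by omega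
          _ = ((a:ℕ)+1) * ξ := by ring
          _ ≤ n * ξ := Nat.mul_le_mul_right _ a.2⟩ : Fin (n*ξ))) ?_ ?_ ?_ ?_
    · intro i hi; exact Finset.mem_univ _
    · intro j hj
      simp only [Finset.mem_coe, Finset.mem_filter, Finset.mem_univ, true_and]
      rw [Nat.mul_comm, Nat.mul_add_div hξ]
      simpa using Nat.div_eq_of_lt j.2
    · intro i hi
      simp only [Finset.mem_coe, Finset.mem_filter, Finset.mem_univ, true_and] at hi
      apply Fin.ext
      simp only
      have h2 := Nat.div_add_mod (i : ℕ) ξ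
      rw [hi] at h2
      rw [Nat.mul_comm] at h2; exact h2
    · intro j hj
      apply Fin.ext
      simp [Nat.mul_comm (a:ℕ) ξ, Nat.mul_add_mod, Nat.mod_eq_of_lt j.2]
  simpa using this

def divFin (n ξ : ℕ) (hξ : 0 < ξ) (i : Fin (n * ξ)) : Fin n :=
  ⟨(i : ℕ) / ξ, (Nat.div_lt_iff_lt_mul hξ).2 i.2⟩

lemma det_expand {K : Type*} [Field K] (n ξ : ℕ) (hξ : 0 < ξ) (d : K) (hd : d ≠ 0)
    (M : Matrix (Fin n) (Fin n) K) :
    (d • (1 : Matrix (Fin (n * ξ)) (Fin (n * ξ)) K) -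
        Matrix.of (fun i j => M (divFin n ξ hξ i) (divFin n ξ hξ j))).det
      = d ^ (n * ξ - n) * (d • (1 : Matrix (Fin n) (Fin n) K) - (ξ : K) • M).det := by
  set P : Matrix (Fin (n * ξ)) (Fin n) K :=
    Matrix.of (fun i a => if a = divFin n ξ hξ i then 1 else 0) with hP
  have h1 : Matrix.of (fun i j => M (divFin n ξ hξ i) (divFin n ξ hξ j)) = P * M * Pᵀ := by
    ext i j
    simp [hP, Matrix.mul_apply, Matrix.transpose_apply, ite_mul, mul_ite]
  have h2 : Pᵀ * P = (ξ : K) • (1 : Matrix (Fin n) (Fin n) K) := by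
    ext a b
    by_cases hab : a = b
    · subst hab
      simp only [Matrix.mul_apply, Matrix.transpose_apply, hP, Matrix.of_apply,
        Matrix.smul_apply, Matrix.one_apply_eq, smul_eq_mul, mul_one]
      have : ∀ i : Fin (n * ξ),
          (if a = divFin n ξ hξ i then (1:K) else 0) * (if a = divFin n ξ hξ i then 1 else 0)
          = if a = divFin n ξ hξ i then 1 else 0 := by
        intro i; split <;> simp
      rw [Finset.sum_congr rfl fun i _ => this i, Finset.sum_boole]
      have : (Finset.univ.filter (fun i : Fin (n * ξ) => a = divFin n ξ hξ i))
          = (Finset.univ.filter (fun i : Fin (n * ξ) => (i : ℕ) / ξ = (a : ℕ))) := by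
        apply Finset.filter_congr
        intro i _
        constructor
        · intro h; rw [h]; rfl
        · intro h; exact Fin.ext h.symm
      rw [this, fiber_card n ξ hξ a]
    · simp only [Matrix.mul_apply, Matrix.transpose_apply, hP, Matrix.of_apply,
        Matrix.smul_apply, Matrix.one_apply_ne hab, smul_eq_mul, mul_zero]
      apply Finset.sum_eq_zero
      intro i _
      by_cases ha : a = divFin n ξ hξ i
      · by_cases hb : b = divFin n ξ hξ i
        · exact absurd (ha.trans hb.symm) hab
        · simp [hb]
      · simp [ha]
  set e : K := -d⁻¹ * ξ with he
  have key : d • (1 : Matrix (Fin (n * ξ)) (Fin (n * ξ)) K) - P * M * Pᵀ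
      = d • (1 + P * (((-d⁻¹) • M) * Pᵀ)) := by
    rw [Matrix.smul_mul, Matrix.mul_smul, smul_add, smul_smul,
      mul_neg, mul_inv_cancel₀ hd]
    simp [sub_eq_add_neg, Matrix.mul_assoc]
  have key2 : (1 : Matrix (Fin n) (Fin n) K) + (((-d⁻¹) • M) * Pᵀ) * P = 1 + e • M := by
    rw [Matrix.mul_assoc, h2, Matrix.smul_mul, Matrix.mul_smul, smul_smul, he]
    simp
  have key3 : d • (1 : Matrix (Fin n) (Fin n) K) - (ξ : K) • M = d • (1 + e • M) := by
    rw [smul_add, smul_smul]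
    have hde : d * e = -(ξ : K) := by
      rw [he]; field_simp
    rw [hde]
    simp [sub_eq_add_neg]
  rw [h1, key, key3, Matrix.det_smul, Matrix.det_smul,
    Matrix.det_one_add_mul_comm, key2, Fintype.card_fin, Fintype.card_fin]
  rw [← mul_assoc, ← pow_add]
  congr 2
  have : n ≤ n * ξ := Nat.le_mul_of_pos_right n hξ
  omega

lemma charpoly_expand (n ξ : ℕ) (hξ : 0 < ξ) (c : ℝ) (M : Matrix (Fin n) (Fin n) ℝ) :
    (c • (1 : Matrix (Fin (n * ξ)) (Fin (n * ξ)) ℝ) +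
        Matrix.of (fun i j : Fin (n * ξ) => M (divFin n ξ hξ i) (divFin n ξ hξ j))).charpoly
      = (X - C c) ^ (n * ξ - n) * (c • (1 : Matrix (Fin n) (Fin n) ℝ) + (ξ : ℝ) • M).charpoly := by
  set K := FractionRing (Polynomial ℝ)
  set φ : Polynomial ℝ →+* K := algebraMap (Polynomial ℝ) K with hφ
  have hinj : Function.Injective φ := IsFractionRing.injective (Polynomial ℝ) K
  set ψ : ℝ →+* K := φ.comp (C : ℝ →+* Polynomial ℝ) with hψ
  set d : K := φ (X - C c) with hd
  have hdne : d ≠ 0 := by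
    rw [hd]
    exact (map_ne_zero_iff φ hinj).2 (Polynomial.X_sub_C_ne_zero c)
  have charmap : ∀ (k : ℕ) (N : Matrix (Fin k) (Fin k) ℝ),
      (Matrix.charmatrix (c • (1 : Matrix (Fin k) (Fin k) ℝ) + N)).map φ
        = d • 1 - N.map ψ := by
    intro k N
    ext i j
    by_cases hij : i = j
    · subst hij
      simp [Matrix.charmatrix_apply_eq, Matrix.map_apply, hd, hψ, map_sub, map_add,
        Matrix.one_apply_eq]
      ring
    · simp [Matrix.charmatrix_apply_ne _ _ _ hij, Matrix.map_apply, hψ,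
        Matrix.one_apply_ne hij, Matrix.one_apply_ne' hij]
  apply hinj
  have lhs : φ ((c • (1 : Matrix (Fin (n * ξ)) (Fin (n * ξ)) ℝ) +
      Matrix.of (fun i j : Fin (n * ξ) => M (divFin n ξ hξ i) (divFin n ξ hξ j))).charpoly)
      = (d • (1 : Matrix (Fin (n * ξ)) (Fin (n * ξ)) K) -
          Matrix.of (fun i j => (M.map ψ) (divFin n ξ hξ i) (divFin n ξ hξ j))).det := by
    rw [Matrix.charpoly, RingHom.map_det, RingHom.mapMatrix_apply, charmap]
    rfl
  have rhs : φ ((c • (1 : Matrix (Fin n) (Fin n) ℝ) + (ξ : ℝ) • M).charpoly)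
      = (d • (1 : Matrix (Fin n) (Fin n) K) - (ξ : K) • (M.map ψ)).det := by
    rw [Matrix.charpoly, RingHom.map_det, RingHom.mapMatrix_apply, charmap]
    congr 1
    ext i j
    simp [Matrix.map_apply, Matrix.smul_apply, map_natCast, smul_eq_mul]
  rw [_root_.map_mul, map_pow, lhs, rhs, ← hd, det_expand n ξ hξ d hdne (M.map ψ)]

def divFin' (m n ξ : ℕ) (hξ : 0 < ξ) (h : m = n * ξ) (i : Fin m) : Fin n :=
  ⟨(i : ℕ) / ξ, (Nat.div_lt_iff_lt_mul hξ).2 (h ▸ i.2)⟩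

lemma charpoly_expand' (m n ξ : ℕ) (hξ : 0 < ξ) (h : m = n * ξ) (c : ℝ)
    (M : Matrix (Fin n) (Fin n) ℝ) (A : Matrix (Fin m) (Fin m) ℝ)
    (hA : A = Matrix.of fun i j => M (divFin' m n ξ hξ h i) (divFin' m n ξ hξ h j)) :
    (c • (1 : Matrix (Fin m) (Fin m) ℝ) + A).charpoly
      = (X - C c) ^ (m - n) * (c • (1 : Matrix (Fin n) (Fin n) ℝ) + (ξ : ℝ) • M).charpoly := by
  subst h
  subst hA
  have : divFin' (n * ξ) n ξ hξ rfl = divFin n ξ hξ := by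
    funext i; rfl
  rw [this]
  exact charpoly_expand n ξ hξ c M

lemma aux (b : ℕ) : ∀ (m : ℕ), 1 ≤ m → ∀ (ξ : ℕ → ℕ), (∀ κ, κ < b → 1 ≤ ξ κ) →
    (∀ κ, κ + 1 < b → ξ κ ∣ ξ (κ + 1)) → (0 < b → ξ (b - 1) ∣ m) →
    ∀ (p : ℕ → ℝ) (c q : ℝ),
    (c • (1 : Matrix (Fin m) (Fin m) ℝ) +
        (∑ κ ∈ Finset.range b, p κ • (Matrix.of fun i j : Fin m =>
            if (i : ℕ) / ξ κ = (j : ℕ) / ξ κ then (1 : ℝ) else 0)) +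
        q • Matrix.of (fun _ _ => (1 : ℝ))).charpoly =
      (X - C (c + (∑ κ ∈ Finset.range b, (ξ κ : ℝ) * p κ) + m * q)) *
      ∏ κ ∈ Finset.range (b + 1),
        (X - C (c + ∑ ς ∈ Finset.range κ, (ξ ς : ℝ) * p ς)) ^
          ((if κ = 0 then m else m / ξ (κ - 1)) - (if κ = b then 1 else m / ξ κ)) := by
  induction b with
  | zero =>
    intro m hm ξ _ _ _ p c q
    simp only [Finset.range_zero, Finset.sum_empty, add_zero, Finset.range_one,
      Finset.prod_singleton]
    have h1m : m = 1 * m := (one_mul m).symm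
    have hm0 : 0 < m := hm
    rw [charpoly_expand' m 1 m hm0 h1m c (Matrix.of fun _ _ => q)
      (q • Matrix.of (fun _ _ => (1:ℝ))) (by ext i j; simp)]
    have : (c • (1 : Matrix (Fin 1) (Fin 1) ℝ) + (m : ℝ) • Matrix.of fun _ _ => q).charpoly
        = X - C (c + m * q) := by
      rw [Matrix.charpoly, Matrix.det_fin_one, Matrix.charmatrix_apply_eq]
      congr 1
      simp
    rw [this]
    simp [Finset.prod_range_one]
    ring
  | succ b ih =>
    intro m hm ξ hξpos hchain hlast p c q
    have hξ0 : 0 < ξ 0 := hξpos 0 (by omega)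
    have hdvd0 : ∀ κ, κ < b + 1 → ξ 0 ∣ ξ κ := by
      intro κ hκ
      induction κ with
      | zero => exact dvd_rfl
      | succ k ihk => exact (ihk (by omega)).trans (hchain k (by omega))
    have hξbm : ξ b ∣ m := by simpa using hlast (by omega)
    have hξ0m : ξ 0 ∣ m := (hdvd0 b (by omega)).trans hξbm
    set n := m / ξ 0 with hn
    have hmn : m = n * ξ 0 := by rw [hn, Nat.div_mul_cancel hξ0m]
    have hn1 : 1 ≤ n := Nat.one_le_div_iff hξ0 |>.2 (Nat.le_of_dvd (by omega) hξ0m)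
    set ξ' : ℕ → ℕ := fun κ => ξ (κ + 1) / ξ 0 with hξ'
    set p' : ℕ → ℝ := fun κ => (ξ 0 : ℝ) * p (κ + 1) with hp'
    have hmul : ∀ κ, κ < b → ξ 0 * ξ' κ = ξ (κ + 1) := by
      intro κ hκ
      rw [hξ']
      exact Nat.mul_div_cancel' (hdvd0 (κ + 1) (by omega))
    -- the reduced matrix
    set B' : ℕ → Matrix (Fin n) (Fin n) ℝ := fun κ => Matrix.of fun i j : Fin n =>
        if (i : ℕ) / ξ' κ = (j : ℕ) / ξ' κ then (1:ℝ) else 0 with hB'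
    set M : Matrix (Fin n) (Fin n) ℝ :=
      p 0 • (1 : Matrix (Fin n) (Fin n) ℝ) + (∑ κ ∈ Finset.range b, p (κ+1) • B' κ)
        + q • Matrix.of (fun _ _ => (1:ℝ)) with hM
    have hA : (∑ κ ∈ Finset.range (b+1), p κ • (Matrix.of fun i j : Fin m =>
            if (i : ℕ) / ξ κ = (j : ℕ) / ξ κ then (1 : ℝ) else 0)) +
          q • Matrix.of (fun _ _ => (1 : ℝ))
        = Matrix.of fun i j => M (divFin' m n (ξ 0) hξ0 hmn i) (divFin' m n (ξ 0) hξ0 hmn j) := by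
      ext i j
      simp only [Matrix.add_apply, Matrix.sum_apply, Matrix.smul_apply, Matrix.of_apply, hM, hB',
        Matrix.one_apply, smul_eq_mul, mul_ite, mul_one, mul_zero]
      rw [Finset.sum_range_succ']
      have hterm : ∀ κ ∈ Finset.range b,
          (if (i : ℕ) / ξ (κ+1) = (j : ℕ) / ξ (κ+1) then p (κ+1) else 0)
          = (if ((divFin' m n (ξ 0) hξ0 hmn i : Fin n) : ℕ) / ξ' κ
              = ((divFin' m n (ξ 0) hξ0 hmn j : Fin n) : ℕ) / ξ' κ then p (κ+1) else 0) := by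
        intro κ hκ
        have : ((divFin' m n (ξ 0) hξ0 hmn i : Fin n) : ℕ) = (i : ℕ) / ξ 0 := rfl
        rw [this]
        have : ((divFin' m n (ξ 0) hξ0 hmn j : Fin n) : ℕ) = (j : ℕ) / ξ 0 := rfl
        rw [this]
        rw [Nat.div_div_eq_div_mul, Nat.div_div_eq_div_mul, hmul κ (Finset.mem_range.1 hκ)]
      rw [Finset.sum_congr rfl hterm]
      have hd0 : (divFin' m n (ξ 0) hξ0 hmn i = divFin' m n (ξ 0) hξ0 hmn j)
          ↔ ((i : ℕ) / ξ 0 = (j : ℕ) / ξ 0) := by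
        constructor
        · intro h; exact congrArg Fin.val h
        · intro h; exact Fin.ext h
      by_cases h0 : (i : ℕ) / ξ 0 = (j : ℕ) / ξ 0
      · rw [if_pos h0, if_pos (hd0.2 h0)]; ring
      · rw [if_neg h0, if_neg (fun hh => h0 (hd0.1 hh))]; ring
    rw [add_assoc, hA, charpoly_expand' m n (ξ 0) hξ0 hmn c M _ rfl]
    -- rewrite the reduced matrix into the inductive form
    have h1 : (∑ κ ∈ Finset.range b, ((ξ 0 : ℝ) * p (κ+1)) • B' κ)
        = (ξ 0 : ℝ) • ∑ κ ∈ Finset.range b, p (κ+1) • B' κ := by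
      rw [Finset.smul_sum]
      exact Finset.sum_congr rfl fun κ _ => (smul_smul _ _ _).symm
    have hc' : c • (1 : Matrix (Fin n) (Fin n) ℝ) + (ξ 0 : ℝ) • M
        = (c + (ξ 0 : ℝ) * p 0) • (1 : Matrix (Fin n) (Fin n) ℝ)
          + (∑ κ ∈ Finset.range b, ((ξ 0 : ℝ) * p (κ+1)) • B' κ)
          + ((ξ 0 : ℝ) * q) • Matrix.of (fun _ _ => (1:ℝ)) := by
      rw [hM, h1, add_smul, smul_add, smul_add, smul_smul, smul_smul]
      abel
    rw [hc']
    have hξ'pos : ∀ κ, κ < b → 1 ≤ ξ' κ := by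
      intro κ hκ
      have := hmul κ hκ
      have h2 := hξpos (κ+1) (by omega)
      nlinarith [this, h2]
    have hchain' : ∀ κ, κ + 1 < b → ξ' κ ∣ ξ' (κ + 1) := by
      intro κ hκ
      have h1' := hmul κ (by omega)
      have h2' := hmul (κ+1) (by omega)
      have h3' := hchain (κ+1) (by omega)
      obtain ⟨t, ht⟩ := h3'
      refine ⟨t, ?_⟩
      have : ξ 0 * ξ' (κ+1) = ξ 0 * (ξ' κ * t) := by
        rw [h2', ht, ← h1', mul_assoc]
      exact Nat.eq_of_mul_eq_mul_left hξ0 this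
    have hlast' : 0 < b → ξ' (b - 1) ∣ n := by
      intro hbpos
      have hb1 : b - 1 + 1 = b := by omega
      have h1' := hmul (b-1) (by omega)
      rw [hb1] at h1'
      obtain ⟨k, hk⟩ := hξbm
      refine ⟨k, ?_⟩
      have : m = ξ 0 * (ξ' (b-1) * k) := by rw [← mul_assoc, h1', ← hk]
      rw [hn, this, Nat.mul_div_cancel_left _ hξ0]
    rw [ih n hn1 ξ' hξ'pos hchain' hlast' (fun κ => (ξ 0 : ℝ) * p (κ+1)) (c + (ξ 0 : ℝ) * p 0)
      ((ξ 0 : ℝ) * q)]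
    -- now both sides are products of linear factors; match them up
    have hsum : ∀ κ, κ ≤ b →
        c + (ξ 0 : ℝ) * p 0 + ∑ ς ∈ Finset.range κ, (ξ' ς : ℝ) * ((ξ 0 : ℝ) * p (ς+1))
        = c + ∑ ς ∈ Finset.range (κ+1), (ξ ς : ℝ) * p ς := by
      intro κ hκ
      rw [Finset.sum_range_succ']
      have : ∀ ς ∈ Finset.range κ, (ξ' ς : ℝ) * ((ξ 0 : ℝ) * p (ς+1))
          = (ξ (ς+1) : ℝ) * p (ς+1) := by
        intro ς hς
        have h := hmul ς (by have := Finset.mem_range.1 hς; omega)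
        rw [← h]
        push_cast
        ring
      rw [Finset.sum_congr rfl this]
      ring
    have hdiv : ∀ κ, κ < b → n / ξ' κ = m / ξ (κ+1) := by
      intro κ hκ
      rw [hn, Nat.div_div_eq_div_mul, hmul κ hκ]
    have htop : c + (ξ 0 : ℝ) * p 0
          + (∑ κ ∈ Finset.range b, (ξ' κ : ℝ) * ((ξ 0 : ℝ) * p (κ+1))) + (n : ℝ) * ((ξ 0 : ℝ) * q)
        = c + (∑ κ ∈ Finset.range (b+1), (ξ κ : ℝ) * p κ) + (m : ℝ) * q := by
      have h1' := hsum b le_rfl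
      have h2' : (n : ℝ) * (ξ 0 : ℝ) = (m : ℝ) := by
        rw [hmn]; push_cast; ring
      calc c + (ξ 0 : ℝ) * p 0
          + (∑ κ ∈ Finset.range b, (ξ' κ : ℝ) * ((ξ 0 : ℝ) * p (κ+1))) + (n : ℝ) * ((ξ 0 : ℝ) * q)
          = (c + (ξ 0 : ℝ) * p 0
            + ∑ κ ∈ Finset.range b, (ξ' κ : ℝ) * ((ξ 0 : ℝ) * p (κ+1)))
            + ((n : ℝ) * (ξ 0 : ℝ)) * q := by ring
        _ = c + (∑ κ ∈ Finset.range (b+1), (ξ κ : ℝ) * p κ) + (m : ℝ) * q := by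
            rw [h1', h2']
    have hfac : ∀ κ ∈ Finset.range (b+1),
        (X - C (c + (ξ 0 : ℝ) * p 0
            + ∑ ς ∈ Finset.range κ, (ξ' ς : ℝ) * ((ξ 0 : ℝ) * p (ς+1)))) ^
          ((if κ = 0 then n else n / ξ' (κ - 1)) - (if κ = b then 1 else n / ξ' κ))
        = (X - C (c + ∑ ς ∈ Finset.range (κ+1), (ξ ς : ℝ) * p ς)) ^
          ((if κ + 1 = 0 then m else m / ξ (κ + 1 - 1))
            - (if κ + 1 = b + 1 then 1 else m / ξ (κ + 1))) := by
      intro κ hκ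
      have hκb : κ ≤ b := by have := Finset.mem_range.1 hκ; omega
      rw [hsum κ hκb]
      congr 1
      have e1 : (if κ = 0 then n else n / ξ' (κ - 1)) = m / ξ κ := by
        by_cases h0 : κ = 0
        · rw [if_pos h0, h0, hn]
        · rw [if_neg h0, hdiv (κ-1) (by omega)]
          congr 2
          omega
      have e2 : (if κ = b then 1 else n / ξ' κ) = (if κ + 1 = b + 1 then 1 else m / ξ (κ + 1)) := by
        by_cases hb' : κ = b
        · simp [hb']
        · rw [if_neg hb', if_neg (by omega), hdiv κ (by omega)]
      rw [e1, e2]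
      simp
    rw [Finset.prod_congr rfl hfac, htop]
    rw [Finset.prod_range_succ' (fun κ => (X - C (c + ∑ ς ∈ Finset.range κ, (ξ ς : ℝ) * p ς)) ^
          ((if κ = 0 then m else m / ξ (κ - 1)) - (if κ = b + 1 then 1 else m / ξ κ))) (b+1)]
    have hg0 : (X - C (c + ∑ ς ∈ Finset.range 0, (ξ ς : ℝ) * p ς)) ^
          ((if (0:ℕ) = 0 then m else m / ξ (0 - 1)) - (if (0:ℕ) = b + 1 then 1 else m / ξ 0))
        = (X - C c) ^ (m - n) := by
      rw [if_pos rfl, if_neg (by omega)]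
      simp [hn]
    rw [hg0]
    ring



/-- Spectrum of the b-step RSB (Parisi) correlation matrix.  The nested block
matrix I_{m/ξ} ⊗ J_ξ (for ξ ∣ m) is represented on `Fin m` as the matrix whose
(i,j) entry is 1 when ⌊i/ξ⌋ = ⌊j/ξ⌋ and 0 otherwise.  Blocks are indexed by
κ = 0,…,b−1 (the paper's κ = 1,…,b). -/
theorem parisi_correlation_matrix_charpoly (b m : ℕ) (hb : 1 ≤ b) (hm : 1 ≤ m)
    (ξ : ℕ → ℕ) (hξpos : ∀ κ, κ < b → 1 ≤ ξ κ)
    (hchain : ∀ κ, κ + 1 < b → ξ κ ∣ ξ (κ + 1)) (hlast : ξ (b - 1) ∣ m)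
    (p : ℕ → ℝ) (c q : ℝ) :
    (c • (1 : Matrix (Fin m) (Fin m) ℝ) +
        (∑ κ ∈ Finset.range b, p κ •
          (Matrix.of fun i j : Fin m =>
            if (i : ℕ) / ξ κ = (j : ℕ) / ξ κ then (1 : ℝ) else 0)) +
        q • Matrix.of (fun _ _ => (1 : ℝ))).charpoly =
      (X - C (c + (∑ κ ∈ Finset.range b, (ξ κ : ℝ) * p κ) + m * q)) *
        (X - C (c + ∑ κ ∈ Finset.range b, (ξ κ : ℝ) * p κ)) ^ (m / ξ (b - 1) - 1) *
        (∏ κ ∈ Finset.range (b - 1),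
          (X - C (c + ∑ ς ∈ Finset.range (κ + 1), (ξ ς : ℝ) * p ς)) ^
            (m / ξ κ - m / ξ (κ + 1))) *
        (X - C c) ^ (m - m / ξ 0) := by
  obtain ⟨b', rfl⟩ : ∃ b', b = b' + 1 := ⟨b - 1, by omega⟩
  rw [aux (b' + 1) m hm ξ hξpos hchain (fun _ => hlast) p c q]
  rw [Finset.prod_range_succ, Finset.prod_range_succ']
  have h0 : (X - C (c + ∑ ς ∈ Finset.range 0, (ξ ς : ℝ) * p ς)) ^
        ((if (0:ℕ) = 0 then m else m / ξ (0 - 1)) - (if (0:ℕ) = b' + 1 then 1 else m / ξ 0))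
      = (X - C c) ^ (m - m / ξ 0) := by
    rw [if_pos rfl, if_neg (by omega)]
    simp
  have hbterm : (X - C (c + ∑ ς ∈ Finset.range (b' + 1), (ξ ς : ℝ) * p ς)) ^
        ((if b' + 1 = 0 then m else m / ξ (b' + 1 - 1))
          - (if b' + 1 = b' + 1 then 1 else m / ξ (b' + 1)))
      = (X - C (c + ∑ ς ∈ Finset.range (b' + 1), (ξ ς : ℝ) * p ς)) ^ (m / ξ b' - 1) := by
    rw [if_neg (by omega), if_pos rfl]
    norm_num
  have hmid : ∀ j ∈ Finset.range b',
      (X - C (c + ∑ ς ∈ Finset.range (j + 1), (ξ ς : ℝ) * p ς)) ^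
        ((if j + 1 = 0 then m else m / ξ (j + 1 - 1))
          - (if j + 1 = b' + 1 then 1 else m / ξ (j + 1)))
      = (X - C (c + ∑ ς ∈ Finset.range (j + 1), (ξ ς : ℝ) * p ς)) ^
        (m / ξ j - m / ξ (j + 1)) := by
    intro j hj
    have hjb : j < b' := Finset.mem_range.1 hj
    rw [if_neg (by omega), if_neg (by omega)]
    norm_num
  rw [h0, hbterm, Finset.prod_congr rfl hmid]
  simp only [Nat.add_sub_cancel]
  ring
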